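/- arXiv:1909.10421 — 2 statements merged into one kernel-verified Lean document; each statement's English description precedes it below -/
import Mathlib

section
/- (Riemann–Roch theorem for graphs) Let G be a finite connected simple graph of genus g = |E(G)| − |V(G)| + 1, let D be a divisor on G, and let K be the canonical divisor given by K(v) = deg(v) − 2 for every vertex v. Then r(D) − r(K − D) = deg(D) − g + 1, where r denotes the rank of a divisor. -/
open Finset
open scoped Classical

namespace SimpleGraph

variable {V : Type*}

/-- A divisor `D : V → ℤ` is effective if all its values are nonnegative. -/
def Effective (D : V → ℤ) : Prop := ∀ v, 0 ≤ D v

/-- The Laplacian of `G` applied to `x : V → ℤ`: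
`(lap G x) v = deg(v)·x(v) − ∑_{u ~ v} x(u) = ∑_{u ~ v} (x v − x u)`. -/
noncomputable def lap [Fintype V] (G : SimpleGraph V) (x : V → ℤ) : V → ℤ :=
  fun v => ∑ u, if G.Adj v u then x v - x u else 0

/-- Two divisors are (linearly) equivalent if they differ by a Laplacian image. -/
def LinEquiv [Fintype V] (G : SimpleGraph V) (D D' : V → ℤ) : Prop :=
  ∃ x : V → ℤ, D - D' = G.lap x

/-- A divisor has positive rank if for every vertex `v`, subtracting one chip at `v`
yields a divisor equivalent to an effective divisor. -/
def PosRank [Fintype V] (G : SimpleGraph V) (D : V → ℤ) : Prop :=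
  ∀ v : V, ∃ E : V → ℤ, Effective E ∧
    G.LinEquiv (D - fun u => if u = v then (1 : ℤ) else 0) E

/-- The gonality of `G`: the minimum degree of an effective divisor of positive rank. -/
noncomputable def gonality [Fintype V] (G : SimpleGraph V) : ℕ :=
  sInf {n : ℕ | ∃ D : V → ℤ, Effective D ∧ G.PosRank D ∧ (∑ v, D v) = (n : ℤ)}

/-- The genus of `G`: `|E| − |V| + 1`. -/
noncomputable def genus [Fintype V] (G : SimpleGraph V) : ℤ :=
  (Nat.card G.edgeSet : ℤ) - (Fintype.card V : ℤ) + 1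

end SimpleGraph

open SimpleGraph

namespace SimpleGraph

variable {V : Type*}

/-- The rank of a divisor: `−1` if `D` is not equivalent to any effective divisor, and
otherwise the largest `r ≥ 0` such that for every effective divisor `F` of degree `r`,
`D − F` is equivalent to an effective divisor. -/
noncomputable def rank [Fintype V] (G : SimpleGraph V) (D : V → ℤ) : ℤ :=
  if ∃ E : V → ℤ, Effective E ∧ G.LinEquiv D E then
    sSup {r : ℤ | 0 ≤ r ∧ ∀ F : V → ℤ, Effective F → (∑ v, F v) = r →
      ∃ E : V → ℤ, Effective E ∧ G.LinEquiv (D - F) E}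
  else -1

/-- The canonical divisor: `K(v) = deg(v) − 2`. -/
noncomputable def canonical [Fintype V] (G : SimpleGraph V) : V → ℤ :=
  fun v => (∑ u, if G.Adj v u then (1 : ℤ) else 0) - 2

end SimpleGraph


namespace RR
open SimpleGraph
variable {V : Type*} [Fintype V] {G : SimpleGraph V}

set_option linter.unusedSectionVars false
set_option linter.unusedVariables false
set_option linter.unnecessarySeqFocus false

lemma ite_antisymm (x : V → ℤ) (v u : V) :
    (if G.Adj v u then x v - x u else 0) = -(if G.Adj u v then x u - x v else 0) := by
  by_cases h : G.Adj v u
  · rw [if_pos h, if_pos h.symm]; ring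
  · rw [if_neg h, if_neg (fun h' => h h'.symm)]; ring

lemma sum_lap (x : V → ℤ) : ∑ v, G.lap x v = 0 := by
  have h1 : ∑ v, G.lap x v = ∑ v, ∑ u, (if G.Adj v u then x v - x u else 0) := rfl
  have h2 : ∑ v, ∑ u, (if G.Adj v u then x v - x u else 0)
      = -∑ v, ∑ u, (if G.Adj v u then x v - x u else 0) := by
    nth_rewrite 1 [Finset.sum_comm]
    rw [← Finset.sum_neg_distrib]
    apply Finset.sum_congr rfl
    intro u _
    rw [← Finset.sum_neg_distrib]
    apply Finset.sum_congr rfl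
    intro v _
    exact ite_antisymm x v u
  rw [h1]
  omega

lemma lap_add (x y : V → ℤ) : G.lap (x + y) = G.lap x + G.lap y := by
  funext v
  simp only [lap, Pi.add_apply, ← Finset.sum_add_distrib]
  apply Finset.sum_congr rfl
  intro u _
  by_cases h : G.Adj v u <;> simp [h] <;> ring

lemma lap_neg (x : V → ℤ) : G.lap (-x) = -G.lap x := by
  funext v
  simp only [lap, Pi.neg_apply, ← Finset.sum_neg_distrib]
  apply Finset.sum_congr rfl
  intro u _
  by_cases h : G.Adj v u <;> simp [h] <;> ring

lemma linEquiv_refl (D : V → ℤ) : G.LinEquiv D D := ⟨0, by funext v; simp [lap]⟩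

lemma linEquiv_symm {D D' : V → ℤ} (h : G.LinEquiv D D') : G.LinEquiv D' D := by
  obtain ⟨x, hx⟩ := h
  exact ⟨-x, by rw [lap_neg, ← hx]; ring⟩

lemma linEquiv_trans {D D' D'' : V → ℤ} (h : G.LinEquiv D D') (h' : G.LinEquiv D' D'') :
    G.LinEquiv D D'' := by
  obtain ⟨x, hx⟩ := h; obtain ⟨y, hy⟩ := h'
  exact ⟨x + y, by rw [lap_add, ← hx, ← hy]; ring⟩

lemma linEquiv_sum_eq {D D' : V → ℤ} (h : G.LinEquiv D D') : ∑ v, D v = ∑ v, D' v := by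
  obtain ⟨x, hx⟩ := h
  have := sum_lap (G := G) x
  have h2 : ∑ v, (D - D') v = ∑ v, G.lap x v := by rw [hx]
  simp only [Pi.sub_apply, Finset.sum_sub_distrib] at h2
  omega

/-- Winnability: equivalent to an effective divisor. -/
def Winnable (G : SimpleGraph V) (D : V → ℤ) : Prop :=
  ∃ E : V → ℤ, Effective E ∧ G.LinEquiv D E

lemma winnable_congr {D D' : V → ℤ} (h : G.LinEquiv D D') :
    Winnable G D ↔ Winnable G D' := by
  constructor
  · rintro ⟨E, hE, he⟩; exact ⟨E, hE, linEquiv_trans (linEquiv_symm h) he⟩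
  · rintro ⟨E, hE, he⟩; exact ⟨E, hE, linEquiv_trans h he⟩

lemma winnable_mono {D D' : V → ℤ} (hle : ∀ v, D v ≤ D' v) (h : Winnable G D) :
    Winnable G D' := by
  obtain ⟨E, hE, x, hx⟩ := h
  refine ⟨E + (D' - D), fun v => ?_, ⟨x, ?_⟩⟩
  · have := hE v; have := hle v; simp only [Pi.add_apply, Pi.sub_apply]; omega
  · rw [← hx]; ring

lemma winnable_sum_nonneg {D : V → ℤ} (h : Winnable G D) : 0 ≤ ∑ v, D v := by
  obtain ⟨E, hE, he⟩ := h
  rw [linEquiv_sum_eq he]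
  exact Finset.sum_nonneg fun v _ => hE v

lemma winnable_of_effective {D : V → ℤ} (h : Effective D) : Winnable G D :=
  ⟨D, h, linEquiv_refl D⟩


/-- The Baker–Norine divisor attached to an ordering `σ`. -/
noncomputable def Nu (G : SimpleGraph V) (σ : V → ℕ) : V → ℤ :=
  fun v => ((univ.filter fun u => G.Adj v u ∧ σ u < σ v).card : ℤ) - 1

lemma nu_unwinnable [Nonempty V] (σ : V → ℕ) (hσ : Function.Injective σ) :
    ¬ Winnable G (Nu G σ) := by
  rintro ⟨E, hE, x, hx⟩
  -- pick v maximizing x, among those minimizing σ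
  obtain ⟨v0, -, hv0⟩ := Finset.exists_max_image (univ : Finset V) x ⟨Classical.arbitrary V, mem_univ _⟩
  set T : Finset V := univ.filter (fun v => ∀ u, x u ≤ x v) with hT
  have hTne : T.Nonempty := ⟨v0, by simp [hT]; intro u; exact hv0 u (mem_univ u)⟩
  obtain ⟨v, hvT, hvmin⟩ := Finset.exists_min_image T σ hTne
  have hvmax : ∀ u, x u ≤ x v := by simpa [hT] using hvT
  have key : ((univ.filter fun u => G.Adj v u ∧ σ u < σ v).card : ℤ) ≤ G.lap x v := by
    rw [lap]
    rw [← Finset.sum_boole]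
    apply Finset.sum_le_sum
    intro u _
    by_cases h : G.Adj v u ∧ σ u < σ v
    · rw [if_pos h, if_pos h.1]
      have hu : u ∉ T := by
        intro huT
        exact absurd h.2 (not_lt.2 (hvmin u huT))
      have : ¬ (∀ w, x w ≤ x u) := by simpa [hT] using hu
      push_neg at this
      obtain ⟨w, hw⟩ := this
      have := hvmax w
      omega
    · rw [if_neg h]
      by_cases h2 : G.Adj v u
      · rw [if_pos h2]; have := hvmax u; omega
      · rw [if_neg h2]
  have hxv : E v = Nu G σ v - G.lap x v := by
    have := congrFun hx v
    simp only [Pi.sub_apply] at this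
    omega
  have := hE v
  rw [hxv] at this
  simp only [Nu] at this
  omega

lemma exists_reversal (σ : V → ℕ) (hσ : Function.Injective σ) :
    ∃ σ' : V → ℕ, Function.Injective σ' ∧ ∀ v, Nu G σ' v = G.canonical v - Nu G σ v := by
  set B := Finset.univ.sup σ with hB
  have hle : ∀ v, σ v ≤ B := fun v => Finset.le_sup (mem_univ v)
  refine ⟨fun v => B - σ v, fun a b hab => ?_, fun v => ?_⟩
  · simp only at hab
    have := hle a; have := hle b
    exact hσ (by omega)
  · simp only [Nu, canonical]
    rw [Finset.sum_boole]
    have hsplit : (univ.filter fun u => G.Adj v u).card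
        = (univ.filter fun u => G.Adj v u ∧ σ u < σ v).card
          + (univ.filter fun u => G.Adj v u ∧ B - σ u < B - σ v).card := by
      rw [← Finset.filter_filter (fun u => G.Adj v u) (fun u => σ u < σ v),
          ← Finset.filter_filter (fun u => G.Adj v u) (fun u => B - σ u < B - σ v)]
      rw [← Finset.card_filter_add_card_filter_not
        (s := univ.filter fun u => G.Adj v u) (p := fun u => σ u < σ v)]
      congr 1
      congr 1
      apply Finset.filter_congr
      intro u hu
      simp only [mem_filter, mem_univ, true_and] at hu
      have hne : σ u ≠ σ v := fun h => (G.ne_of_adj hu) (hσ h).symm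
      have := hle u; have := hle v
      simp only [not_lt]
      constructor <;> intro h <;> omega
    push_cast [hsplit]
    ring

lemma sum_adj_card : ∑ v, ∑ u, (if G.Adj v u then (1:ℤ) else 0)
    = 2 * (Nat.card G.edgeSet : ℤ) := by
  classical
  have h1 : ∀ v, ∑ u, (if G.Adj v u then (1:ℤ) else 0) = (G.degree v : ℤ) := by
    intro v
    rw [Finset.sum_boole]
    congr 1
    rw [degree, neighborFinset_eq_filter]
  simp_rw [h1]
  rw [← Nat.cast_sum]
  rw [sum_degrees_eq_twice_card_edges]
  rw [Nat.card_eq_fintype_card, ← Set.toFinset_card]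
  push_cast
  rfl

lemma sum_nu (σ : V → ℕ) (hσ : Function.Injective σ) :
    ∑ v, Nu G σ v = (Nat.card G.edgeSet : ℤ) - (Fintype.card V : ℤ) := by
  have hA : ∀ v, Nu G σ v = (∑ u, if G.Adj v u ∧ σ u < σ v then (1:ℤ) else 0) - 1 := by
    intro v; rw [Nu, Finset.sum_boole]
  simp_rw [hA]
  rw [Finset.sum_sub_distrib]
  simp only [Finset.sum_const, card_univ, nsmul_eq_mul, mul_one]
  have key : (∑ v, ∑ u, if G.Adj v u ∧ σ u < σ v then (1:ℤ) else 0)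
      = (Nat.card G.edgeSet : ℤ) := by
    set A := ∑ v, ∑ u, if G.Adj v u ∧ σ u < σ v then (1:ℤ) else 0 with hAdef
    set B := ∑ v, ∑ u, if G.Adj v u ∧ σ v < σ u then (1:ℤ) else 0 with hBdef
    have hAB : A = B := by
      rw [hAdef, Finset.sum_comm]
      apply Finset.sum_congr rfl; intro v _
      apply Finset.sum_congr rfl; intro u _
      congr 1
      rw [eq_iff_iff]
      constructor
      · rintro ⟨h1, h2⟩; exact ⟨h1.symm, h2⟩
      · rintro ⟨h1, h2⟩; exact ⟨h1.symm, h2⟩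
    have hsum : A + B = ∑ v, ∑ u, (if G.Adj v u then (1:ℤ) else 0) := by
      rw [hAdef, hBdef, ← Finset.sum_add_distrib]
      apply Finset.sum_congr rfl; intro v _
      rw [← Finset.sum_add_distrib]
      apply Finset.sum_congr rfl; intro u _
      by_cases h : G.Adj v u
      · have hne : σ u ≠ σ v := fun he => (G.ne_of_adj h) (hσ he).symm
        rcases lt_or_gt_of_ne hne with h2 | h2
        · rw [if_pos ⟨h, h2⟩, if_neg (by omega), if_pos h]; ring
        · rw [if_neg (by omega), if_pos ⟨h, h2⟩, if_pos h]; ring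
      · rw [if_neg (by tauto), if_neg (by tauto), if_neg h]; ring
    rw [sum_adj_card] at hsum
    omega
  rw [key]

lemma sum_canonical : ∑ v, G.canonical v = 2 * G.genus - 2 := by
  simp only [canonical, genus]
  rw [Finset.sum_sub_distrib, sum_adj_card]
  simp only [Finset.sum_const, card_univ, nsmul_eq_mul, mul_one]
  ring

/-- Geometric weight by distance to `q`. -/
noncomputable def wfn (G : SimpleGraph V) (q : V) : V → ℕ :=
  fun v => ∑ i ∈ Finset.range (G.dist v q), (Fintype.card V ^ 2 + 1) ^ (Fintype.card V - 1 - i)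

lemma dist_lt_card (hG : G.Connected) (v q : V) : G.dist v q < Fintype.card V := by
  obtain ⟨p, hpath, hlen⟩ := hG.exists_path_of_dist v q
  rw [← hlen]
  exact hpath.length_lt

omit [Fintype V] in
lemma exists_closer (hG : G.Connected) {v q : V} (hvq : v ≠ q) :
    ∃ u, G.Adj v u ∧ G.dist u q + 1 = G.dist v q := by
  have hd : G.dist v q ≠ 0 := dist_ne_zero_iff_ne_and_reachable.2 ⟨hvq, hG.preconnected v q⟩
  obtain ⟨p, hp⟩ := exists_walk_of_dist_ne_zero hd
  cases p with
  | nil => exact absurd rfl hvq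
  | @cons _ u _ hadj p' =>
    refine ⟨u, hadj, ?_⟩
    have h1 : G.dist u q ≤ p'.length := dist_le p'
    have h2 : G.dist v q ≤ G.dist v u + G.dist u q := hG.dist_triangle
    have h3 : G.dist v u = 1 := dist_eq_one_iff_adj.2 hadj
    simp only [Walk.length_cons] at hp
    omega

omit [Fintype V] in
lemma dist_adj_le (hG : G.Connected) {v u : V} (q : V) (h : G.Adj v u) :
    G.dist u q ≤ G.dist v q + 1 := by
  have h2 : G.dist u q ≤ G.dist u v + G.dist v q := hG.dist_triangle
  have h3 : G.dist u v = 1 := dist_eq_one_iff_adj.2 h.symm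
  omega

/-- The key firing inequality. -/
lemma fire_weight_neg (hG : G.Connected) (q : V) (S : Finset V) (hS : S.Nonempty)
    (hq : q ∉ S) :
    (∑ v ∈ S, ∑ u ∈ Sᶜ, if G.Adj v u then ((wfn G q u : ℤ) - wfn G q v) else 0) < 0 := by
  set n := Fintype.card V with hn
  set M := n ^ 2 + 1 with hM
  have hM1 : 1 ≤ M := Nat.le_add_left 1 (n ^ 2)
  set W : ℕ → ℕ := fun d => ∑ i ∈ Finset.range d, M ^ (n - 1 - i) with hW
  have hwfn : ∀ v, wfn G q v = W (G.dist v q) := fun v => rfl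
  have hWsucc : ∀ d, W (d + 1) = W d + M ^ (n - 1 - d) := by
    intro d; rw [hW]; simp [Finset.sum_range_succ]
  have hWmono : ∀ a b, a ≤ b → W a ≤ W b := by
    intro a b hab
    apply Finset.sum_le_sum_of_subset (Finset.range_subset_range.2 hab)
  obtain ⟨v0, hv0S, hv0min⟩ := Finset.exists_min_image S (fun v => G.dist v q) hS
  set d0 := G.dist v0 q with hd0
  have hv0q : v0 ≠ q := fun h => hq (h ▸ hv0S)
  obtain ⟨u0, hadj0, hu0d⟩ := exists_closer hG hv0q
  have hd0pos : 1 ≤ d0 := by omega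
  have hd0lt : d0 < n := dist_lt_card hG v0 q
  have hu0S : u0 ∉ S := by
    intro h
    have := hv0min u0 h
    omega
  rw [← Finset.sum_product']
  set T := S ×ˢ Sᶜ with hT
  set f : V × V → ℤ := fun p => if G.Adj p.1 p.2 then ((wfn G q p.2 : ℤ) - wfn G q p.1) else 0
    with hf
  have hp0T : (v0, u0) ∈ T := by
    rw [hT, Finset.mem_product]
    exact ⟨hv0S, Finset.mem_compl.2 hu0S⟩
  set P : ℤ := (M : ℤ) ^ (n - 1 - d0) with hP
  have hMpos : (0 : ℤ) < (M : ℤ) := by exact_mod_cast Nat.lt_of_lt_of_le Nat.zero_lt_one hM1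
  have hPpos : 0 < P := by rw [hP]; exact pow_pos hMpos _
  have hPcast : ((M ^ (n - 1 - d0) : ℕ) : ℤ) = P := by rw [hP]; push_cast; rfl
  have hfp0 : f (v0, u0) = -((M : ℤ) * P) := by
    rw [hf]
    simp only
    rw [if_pos hadj0, hwfn, hwfn]
    have hdd : G.dist v0 q = G.dist u0 q + 1 := by omega
    rw [hdd, hWsucc]
    have hexp : n - 1 - G.dist u0 q = (n - 1 - d0) + 1 := by omega
    rw [hexp]
    have hc2 : ((M ^ ((n - 1 - d0) + 1) : ℕ) : ℤ) = (M : ℤ) * P := by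
      rw [hP]; push_cast [pow_succ]; ring
    push_cast [Nat.cast_add] at hc2 ⊢
    omega
  have hbound : ∀ p ∈ T, f p ≤ P := by
    rintro ⟨v, u⟩ hpT
    rw [hT, Finset.mem_product] at hpT
    rw [hf]
    simp only
    by_cases h : G.Adj v u
    · rw [if_pos h]
      have hdv : d0 ≤ G.dist v q := hv0min v hpT.1
      have hdu : G.dist u q ≤ G.dist v q + 1 := dist_adj_le hG q h
      have h2 : M ^ (n - 1 - G.dist v q) ≤ M ^ (n - 1 - d0) :=
        Nat.pow_le_pow_right hM1 (by omega)
      have h3 : W (G.dist u q) ≤ W (G.dist v q) + M ^ (n - 1 - d0) := by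
        calc W (G.dist u q) ≤ W (G.dist v q + 1) := hWmono _ _ hdu
        _ = W (G.dist v q) + M ^ (n - 1 - G.dist v q) := hWsucc _
        _ ≤ W (G.dist v q) + M ^ (n - 1 - d0) := by omega
      rw [hwfn, hwfn]
      zify at h3
      have hPcast2 : ((n : ℤ) ^ 2 + 1) ^ (n - 1 - d0) = P := by
        rw [hP, hM]; push_cast; ring
      linarith [hPcast2]
    · rw [if_neg h]; exact le_of_lt hPpos
  have hcardn : (T.erase (v0, u0)).card ≤ n * n := by
    have h1 : (T.erase (v0, u0)).card ≤ T.card := Finset.card_le_card (Finset.erase_subset _ _)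
    have h2 : T.card ≤ n * n := by
      rw [hT, Finset.card_product]
      have hS1 : S.card ≤ n := by simpa [hn] using Finset.card_le_univ S
      have hS2 : Sᶜ.card ≤ n := by simpa [hn] using Finset.card_le_univ Sᶜ
      exact Nat.mul_le_mul hS1 hS2
    omega
  have hcard : ((T.erase (v0, u0)).card : ℤ) ≤ (M : ℤ) - 1 := by
    have h4 : ((T.erase (v0, u0)).card : ℤ) ≤ (n : ℤ) * n := by exact_mod_cast hcardn
    have h5 : (M : ℤ) = (n : ℤ) ^ 2 + 1 := by rw [hM]; push_cast; ring
    nlinarith [h4, h5]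
  have hsum_rest : ∑ p ∈ T.erase (v0, u0), f p ≤ ((T.erase (v0, u0)).card : ℤ) * P := by
    have h6 := Finset.sum_le_sum (s := T.erase (v0, u0)) (g := fun _ => P) (fun p hp => hbound p (Finset.mem_of_mem_erase hp))
    simpa [Finset.sum_const, nsmul_eq_mul] using h6
  have hdecomp : ∑ p ∈ T, f p = f (v0, u0) + ∑ p ∈ T.erase (v0, u0), f p :=
    (Finset.add_sum_erase T f hp0T).symm
  rw [hdecomp, hfp0]
  nlinarith [hPpos, mul_le_mul_of_nonneg_right hcard (le_of_lt hPpos), hsum_rest]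

lemma lap_indicator_sum (S : Finset V) (y : V → ℤ) :
    ∑ v, G.lap (fun u => if u ∈ S then (1:ℤ) else 0) v * y v
      = ∑ v ∈ S, ∑ u ∈ Sᶜ, (if G.Adj v u then y v - y u else 0) := by
  set χ : V → ℤ := fun u => if u ∈ S then (1:ℤ) else 0 with hχ
  have step1 : ∀ v, G.lap χ v * y v
      = ∑ u, (if G.Adj v u then (χ v - χ u) * y v else 0) := by
    intro v
    rw [lap, Finset.sum_mul]
    apply Finset.sum_congr rfl; intro u _
    by_cases h : G.Adj v u <;> simp [h]
  have split_u : ∀ (g : V → ℤ), ∑ u, g u = ∑ u ∈ S, g u + ∑ u ∈ Sᶜ, g u :=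
    fun g => (Finset.sum_add_sum_compl S g).symm
  calc ∑ v, G.lap χ v * y v
      = ∑ v, ∑ u, (if G.Adj v u then (χ v - χ u) * y v else 0) := by
        apply Finset.sum_congr rfl; intro v _; exact step1 v
    _ = ∑ v ∈ S, ∑ u, (if G.Adj v u then (χ v - χ u) * y v else 0)
        + ∑ v ∈ Sᶜ, ∑ u, (if G.Adj v u then (χ v - χ u) * y v else 0) :=
        split_u _
    _ = (∑ v ∈ S, ∑ u ∈ Sᶜ, (if G.Adj v u then y v else 0))
        - ∑ v ∈ Sᶜ, ∑ u ∈ S, (if G.Adj v u then y v else 0) := by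
        have hS1 : ∀ v ∈ S, ∑ u, (if G.Adj v u then (χ v - χ u) * y v else 0)
            = ∑ u ∈ Sᶜ, (if G.Adj v u then y v else 0) := by
          intro v hv
          rw [split_u]
          have h1 : ∑ u ∈ S, (if G.Adj v u then (χ v - χ u) * y v else 0) = 0 :=
            Finset.sum_eq_zero (fun u hu => by
              by_cases h : G.Adj v u <;> simp [h, hχ, hv, hu])
          rw [h1, zero_add]
          apply Finset.sum_congr rfl; intro u hu
          have hu' : u ∉ S := Finset.mem_compl.1 hu
          by_cases h : G.Adj v u <;> simp [h, hχ, hv, hu']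
        have hS2 : ∀ v ∈ Sᶜ, ∑ u, (if G.Adj v u then (χ v - χ u) * y v else 0)
            = -∑ u ∈ S, (if G.Adj v u then y v else 0) := by
          intro v hv
          have hv' : v ∉ S := Finset.mem_compl.1 hv
          rw [split_u, ← Finset.sum_neg_distrib]
          have h2 : ∑ u ∈ Sᶜ, (if G.Adj v u then (χ v - χ u) * y v else 0) = 0 :=
            Finset.sum_eq_zero (fun u hu => by
              have hu' : u ∉ S := Finset.mem_compl.1 hu
              by_cases h : G.Adj v u <;> simp [h, hχ, hv', hu'])
          rw [h2, add_zero]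
          apply Finset.sum_congr rfl; intro u hu
          by_cases h : G.Adj v u <;> simp [h, hχ, hv', hu]
        rw [Finset.sum_congr rfl hS1, Finset.sum_congr rfl hS2, Finset.sum_neg_distrib]
        ring
    _ = (∑ v ∈ S, ∑ u ∈ Sᶜ, (if G.Adj v u then y v else 0))
        - ∑ v ∈ S, ∑ u ∈ Sᶜ, (if G.Adj v u then y u else 0) := by
        congr 1
        rw [Finset.sum_comm]
        apply Finset.sum_congr rfl; intro v hv
        apply Finset.sum_congr rfl; intro u hu
        congr 1
        exact propext (adj_comm G u v)
    _ = ∑ v ∈ S, ∑ u ∈ Sᶜ, (if G.Adj v u then y v - y u else 0) := by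
        rw [← Finset.sum_sub_distrib]
        apply Finset.sum_congr rfl; intro v _
        rw [← Finset.sum_sub_distrib]
        apply Finset.sum_congr rfl; intro u _
        by_cases h : G.Adj v u <;> simp [h]

lemma lap_smul (c : ℤ) (x : V → ℤ) :
    G.lap (fun v => c * x v) = fun v => c * G.lap x v := by
  funext v
  rw [lap, lap, Finset.mul_sum]
  apply Finset.sum_congr rfl
  intro u _
  by_cases h : G.Adj v u
  · rw [if_pos h, if_pos h, mul_sub]
  · rw [if_neg h, if_neg h, mul_zero]

lemma wfn_q_eq_zero (q : V) : wfn G q q = 0 := by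
  rw [wfn, SimpleGraph.dist_self]
  simp

lemma lap_wfn_ge_one (hG : G.Connected) (q v : V) (hvq : v ≠ q) :
    1 ≤ G.lap (fun u => (wfn G q u : ℤ)) v := by
  have hkey := fire_weight_neg hG q {v} (Finset.singleton_nonempty v)
      (by simp [Ne.symm hvq])
  rw [Finset.sum_singleton] at hkey
  have hlap : G.lap (fun u => (wfn G q u : ℤ)) v
      = -∑ u ∈ ({v} : Finset V)ᶜ, (if G.Adj v u then ((wfn G q u : ℤ) - wfn G q v) else 0) := by
    rw [lap, ← Finset.sum_add_sum_compl ({v} : Finset V)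
      (fun u => if G.Adj v u then ((wfn G q v : ℤ) - wfn G q u) else 0)]
    rw [Finset.sum_singleton, if_neg (G.irrefl), zero_add, ← Finset.sum_neg_distrib]
    apply Finset.sum_congr rfl
    intro u _
    by_cases h : G.Adj v u <;> simp [h, neg_sub]
  rw [hlap]
  omega

lemma exists_nonneg_off_q (hG : G.Connected) (q : V) (D : V → ℤ) :
    ∃ D' : V → ℤ, G.LinEquiv D D' ∧ ∀ v, v ≠ q → 0 ≤ D' v := by
  have hne : Nonempty V := hG.nonempty
  obtain ⟨m, -, hm⟩ := Finset.exists_max_image (univ : Finset V) (fun v => -D v)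
    Finset.univ_nonempty
  set N : ℤ := max (-D m) 0 with hN
  have hN0 : 0 ≤ N := le_max_right _ _
  have hND : ∀ v, -D v ≤ N := fun v => le_trans (hm v (mem_univ v)) (le_max_left _ _)
  set x : V → ℤ := fun u => -N * (wfn G q u : ℤ) with hx
  refine ⟨D - G.lap x, ⟨x, by rw [sub_sub_cancel]⟩, ?_⟩
  intro v hvq
  have h1 : G.lap x v = -N * G.lap (fun u => (wfn G q u : ℤ)) v := by
    rw [hx]
    exact congrFun (lap_smul (-N) (fun u => (wfn G q u : ℤ))) v
  have h2 := lap_wfn_ge_one hG q v hvq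
  have h3 := hND v
  simp only [Pi.sub_apply]
  rw [h1]
  nlinarith [h2, hN0]

lemma lap_indicator_mem {S : Finset V} {v : V} (hv : v ∈ S) :
    G.lap (fun u => if u ∈ S then (1:ℤ) else 0) v
      = ((univ.filter fun u => G.Adj v u ∧ u ∉ S).card : ℤ) := by
  rw [lap, ← Finset.sum_boole]
  apply Finset.sum_congr rfl
  intro u _
  by_cases h : G.Adj v u
  · by_cases hu : u ∈ S <;> simp [h, hu, hv]
  · simp [h]

lemma lap_indicator_not_mem {S : Finset V} {v : V} (hv : v ∉ S) :
    G.lap (fun u => if u ∈ S then (1:ℤ) else 0) v ≤ 0 := by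
  rw [lap]
  apply Finset.sum_nonpos
  intro u _
  by_cases h : G.Adj v u
  · by_cases hu : u ∈ S <;> simp [h, hu, hv]
  · simp [h]

/-- Existence of a `q`-reduced representative. -/
lemma exists_reduced (hG : G.Connected) (q : V) (D : V → ℤ) :
    ∃ D' : V → ℤ, G.LinEquiv D D' ∧ (∀ v, v ≠ q → 0 ≤ D' v) ∧
      ∀ S : Finset V, S.Nonempty → q ∉ S →
        ∃ v ∈ S, D' v < ((univ.filter fun u => G.Adj v u ∧ u ∉ S).card : ℤ) := by
  set A : Set (V → ℤ) := {E | G.LinEquiv D E ∧ ∀ v, v ≠ q → 0 ≤ E v} with hA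
  set β : (V → ℤ) → ℤ := fun E => ∑ v, E v * (wfn G q v : ℤ) with hβdef
  have hAne : (β '' A).Nonempty := by
    obtain ⟨E, h1, h2⟩ := exists_nonneg_off_q hG q D
    exact ⟨β E, E, ⟨h1, h2⟩, rfl⟩
  have hbdd : BddBelow (β '' A) := by
    refine ⟨0, ?_⟩
    rintro _ ⟨E, hE, rfl⟩
    apply Finset.sum_nonneg
    intro v _
    by_cases hv : v = q
    · subst hv; rw [wfn_q_eq_zero]; simp
    · exact mul_nonneg (hE.2 v hv) (Int.natCast_nonneg _)
  obtain ⟨D', hD'A, hβeq⟩ : ∃ E ∈ A, β E = sInf (β '' A) := by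
    obtain ⟨E, hE, hEeq⟩ := Int.csInf_mem hAne hbdd
    exact ⟨E, hE, hEeq⟩
  refine ⟨D', hD'A.1, hD'A.2, ?_⟩
  intro S hS hqS
  by_contra hcon
  push_neg at hcon
  set χ : V → ℤ := fun u => if u ∈ S then (1:ℤ) else 0 with hχ
  set D'' := D' - G.lap χ with hD''
  have hD''A : D'' ∈ A := by
    constructor
    · exact linEquiv_trans hD'A.1 ⟨χ, by rw [hD'', sub_sub_cancel]⟩
    · intro v hvq
      by_cases hvS : v ∈ S
      · have := hcon v hvS
        rw [hD'']
        simp only [Pi.sub_apply]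
        rw [lap_indicator_mem hvS]
        omega
      · have h9 : G.lap χ v ≤ 0 := by rw [hχ]; exact lap_indicator_not_mem hvS
        have := hD'A.2 v hvq
        rw [hD'']
        simp only [Pi.sub_apply]
        omega
  have hfire := fire_weight_neg hG q S hS hqS
  have hlapsum : ∑ v, G.lap χ v * (wfn G q v : ℤ)
      = ∑ v ∈ S, ∑ u ∈ Sᶜ, (if G.Adj v u then ((wfn G q v : ℤ) - wfn G q u) else 0) :=
    lap_indicator_sum S _
  have hpos : 0 < ∑ v, G.lap χ v * (wfn G q v : ℤ) := by
    rw [hlapsum]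
    have hneg : ∑ v ∈ S, ∑ u ∈ Sᶜ, (if G.Adj v u then ((wfn G q v : ℤ) - wfn G q u) else 0)
        = -∑ v ∈ S, ∑ u ∈ Sᶜ, (if G.Adj v u then ((wfn G q u : ℤ) - wfn G q v) else 0) := by
      rw [← Finset.sum_neg_distrib]
      apply Finset.sum_congr rfl; intro v _
      rw [← Finset.sum_neg_distrib]
      apply Finset.sum_congr rfl; intro u _
      by_cases h : G.Adj v u <;> simp [h, neg_sub]
    rw [hneg]
    omega
  have hβ'' : β D'' < β D' := by
    have hsplit : β D'' = β D' - ∑ v, G.lap χ v * (wfn G q v : ℤ) := by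
      rw [hβdef, hD'']
      simp only [Pi.sub_apply, sub_mul]
      rw [Finset.sum_sub_distrib]
    rw [hsplit]
    omega
  have hle : sInf (β '' A) ≤ β D'' := csInf_le hbdd ⟨D'', hD''A, rfl⟩
  omega

lemma mem_take_indexOf {α : Type*} [DecidableEq α] :
    ∀ (l : List α) (i : ℕ) (a : α), a ∈ l.take i → l.idxOf a < i := by
  intro l
  induction l with
  | nil => intro i a ha; simp at ha
  | cons b t ihl =>
    intro i a ha
    cases i with
    | zero => simp at ha
    | succ j =>
      rw [List.take_succ_cons] at ha
      by_cases hab : a = b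
      · subst hab
        rw [List.idxOf_cons_self]
        omega
      · have ha' : a ∈ t.take j := by
          rcases List.mem_cons.1 ha with h | h
          · exact absurd h hab
          · exact h
        have := ihl j a ha'
        rw [List.idxOf_cons_ne _ (fun h => hab h.symm)]
        omega

/-- Greedy construction of the burning order. -/
lemma greedy_list (D' : V → ℤ) :
    ∀ (m : ℕ) (S : Finset V), S.card = m →
      (∀ S' ⊆ S, S'.Nonempty →
        ∃ v ∈ S', D' v < ((univ.filter fun u => G.Adj v u ∧ u ∉ S').card : ℤ)) →
      ∃ L : List V, L.Nodup ∧ L.toFinset = S ∧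
        ∀ (i : ℕ) (h : i < L.length),
          D' (L.get ⟨i, h⟩)
            < ((univ.filter fun u => G.Adj (L.get ⟨i, h⟩) u ∧ (u ∉ S ∨ u ∈ L.take i)).card : ℤ) := by
  intro m
  induction m with
  | zero =>
    intro S hS hred
    refine ⟨[], by simp, by simp [Finset.card_eq_zero.1 hS], ?_⟩
    intro i h
    simp at h
  | succ k ih =>
    intro S hS hred
    have hSne : S.Nonempty := by rw [← Finset.card_pos, hS]; omega
    obtain ⟨v, hvS, hv⟩ := hred S (Finset.Subset.refl S) hSne
    obtain ⟨L', hnd, htf, hcond⟩ := ih (S.erase v)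
      (by rw [Finset.card_erase_of_mem hvS, hS]; rfl)
      (fun S' hsub hne => hred S' (hsub.trans (Finset.erase_subset v S)) hne)
    have hvL' : v ∉ L' := by
      intro hmem
      rw [← List.mem_toFinset, htf] at hmem
      exact (Finset.notMem_erase v S) hmem
    refine ⟨v :: L', List.nodup_cons.2 ⟨hvL', hnd⟩, ?_, ?_⟩
    · rw [List.toFinset_cons, htf, Finset.insert_erase hvS]
    · intro i h
      match i, h with
      | 0, h =>
        show D' v < _
        refine lt_of_lt_of_le hv ?_
        have hfeq : (univ.filter fun u => G.Adj v u ∧ u ∉ S)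
            = (univ.filter fun u => G.Adj v u ∧ (u ∉ S ∨ u ∈ (v :: L').take 0)) := by
          apply Finset.filter_congr
          intro u _
          simp
        rw [hfeq]
        exact le_rfl
      | (i+1), h =>
        have h' : i < L'.length := by
          simp only [List.length_cons] at h
          omega
        have hstep := hcond i h'
        have hget : (v :: L').get ⟨i+1, h⟩ = L'.get ⟨i, h'⟩ := rfl
        rw [hget]
        refine lt_of_lt_of_le hstep ?_
        apply le_of_eq
        norm_cast
        congr 1
        apply Finset.filter_congr
        intro u _
        have htake : (v :: L').take (i+1) = v :: L'.take i := rfl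
        rw [htake]
        constructor
        · rintro ⟨ha, hb⟩
          refine ⟨ha, ?_⟩
          rcases hb with hb | hb
          · rw [Finset.mem_erase] at hb
            push_neg at hb
            by_cases huv : u = v
            · right; rw [huv]; exact List.mem_cons_self
            · left; exact hb huv
          · right; exact List.mem_cons_of_mem v hb
        · rintro ⟨ha, hb⟩
          refine ⟨ha, ?_⟩
          rcases hb with hb | hb
          · left; intro hmem; exact hb (Finset.mem_of_mem_erase hmem)
          · rcases List.mem_cons.1 hb with hb | hb
            · left; rw [hb]; exact Finset.notMem_erase v S
            · right; exact hb

/-- Every unwinnable divisor is equivalent to one dominated by some `Nu`. -/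
lemma unwinnable_dominated (hG : G.Connected) {D : V → ℤ} (hD : ¬ Winnable G D) :
    ∃ σ : V → ℕ, Function.Injective σ ∧ ∃ H : V → ℤ, G.LinEquiv D H ∧ ∀ v, H v ≤ Nu G σ v := by
  have hne : Nonempty V := hG.nonempty
  set q : V := Classical.arbitrary V with hq
  obtain ⟨D', hDD', hpos, hred⟩ := exists_reduced hG q D
  have hD'q : D' q < 0 := by
    by_contra hc
    push_neg at hc
    apply hD
    refine ⟨D', fun v => ?_, hDD'⟩
    by_cases hv : v = q
    · rw [hv]; exact hc
    · exact hpos v hv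
  obtain ⟨L, hnd, htf, hcond⟩ := greedy_list D' (univ.erase q).card (univ.erase q) rfl
    (fun S' hsub hne' => hred S' hne'
      (fun hqS => (Finset.mem_erase.1 (hsub hqS)).1 rfl))
  set Lf : List V := q :: L with hLf
  have hqL : q ∉ L := by
    intro hmem
    rw [← List.mem_toFinset, htf] at hmem
    exact (Finset.mem_erase.1 hmem).1 rfl
  have hndf : Lf.Nodup := List.nodup_cons.2 ⟨hqL, hnd⟩
  have hmem : ∀ v : V, v ∈ Lf := by
    intro v
    by_cases hv : v = q
    · rw [hv]; exact List.mem_cons_self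
    · exact List.mem_cons_of_mem q (by rw [← List.mem_toFinset, htf]; exact Finset.mem_erase.2 ⟨hv, mem_univ v⟩)
  set σ : V → ℕ := fun v => Lf.idxOf v with hσ
  have hσlt : ∀ v, σ v < Lf.length := fun v => List.idxOf_lt_length_iff.2 (hmem v)
  have hget : ∀ v, Lf.get ⟨σ v, hσlt v⟩ = v := fun v => List.idxOf_get (hσlt v)
  have hinj : Function.Injective σ := by
    intro a b hab
    rw [← hget a, ← hget b]
    congr 1
    exact Fin.ext hab
  have hσq : σ q = 0 := by rw [hσ]; exact List.idxOf_cons_self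
  have hσL : ∀ (i : ℕ) (h : i < L.length), σ (L.get ⟨i, h⟩) = i + 1 := by
    intro i h
    have h2 : i + 1 < Lf.length := by rw [hLf, List.length_cons]; omega
    have hgeteq : Lf.get ⟨i+1, h2⟩ = L.get ⟨i, h⟩ := rfl
    have hv := hget (L.get ⟨i, h⟩)
    have hinjget := List.nodup_iff_injective_get.1 hndf
    have : (⟨σ (L.get ⟨i, h⟩), hσlt _⟩ : Fin Lf.length) = ⟨i+1, h2⟩ := by
      apply hinjget
      rw [hv, hgeteq]
    exact congrArg Fin.val this
  refine ⟨σ, hinj, D', hDD', ?_⟩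
  intro v
  by_cases hv : v = q
  · have hempty : (univ.filter fun u => G.Adj v u ∧ σ u < σ v) = ∅ := by
      apply Finset.filter_false_of_mem
      intro u _
      rw [hv, hσq]
      rintro ⟨-, hlt⟩
      omega
    rw [Nu, hempty]
    simp only [Finset.card_empty, Nat.cast_zero]
    have hneg : D' v < 0 := by rw [hv]; exact hD'q
    omega
  · have hvL : v ∈ L := by
      rcases List.mem_cons.1 (hmem v) with h | h
      · exact absurd h hv
      · exact h
    obtain ⟨⟨i, h⟩, hgi⟩ := List.mem_iff_get.1 hvL
    have hD'v := hcond i h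
    rw [hgi] at hD'v
    have hσv : σ v = i + 1 := by rw [← hgi]; exact hσL i h
    have hsub : (univ.filter fun u => G.Adj v u ∧ (u ∉ univ.erase q ∨ u ∈ L.take i))
        ⊆ (univ.filter fun u => G.Adj v u ∧ σ u < σ v) := by
      intro u hu
      simp only [Finset.mem_filter, Finset.mem_univ, true_and] at hu ⊢
      refine ⟨hu.1, ?_⟩
      rcases hu.2 with h1 | h2
      · have huq : u = q := by
          by_contra hne2
          exact h1 (Finset.mem_erase.2 ⟨hne2, mem_univ u⟩)
        rw [huq, hσq, hσv]
        omega
      · have huq : u ≠ q := fun he => hqL (he ▸ List.mem_of_mem_take h2)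
        have hidx : L.idxOf u < i := mem_take_indexOf L i u h2
        have : σ u = L.idxOf u + 1 := by
          rw [hσ, hLf]
          exact List.idxOf_cons_ne L (fun he => huq he.symm)
        rw [this, hσv]
        omega
    have hcard := Finset.card_le_card hsub
    rw [Nu]
    have : ((univ.filter fun u => G.Adj v u ∧ (u ∉ univ.erase q ∨ u ∈ L.take i)).card : ℤ)
        ≤ ((univ.filter fun u => G.Adj v u ∧ σ u < σ v).card : ℤ) := by exact_mod_cast hcard
    omega

/-- Point mass divisor. -/
noncomputable def dd (v0 : V) (r : ℤ) : V → ℤ := fun u => if u = v0 then r else 0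

lemma sum_dd (v0 : V) (r : ℤ) : ∑ u, dd v0 r u = r := by
  simp only [dd]
  rw [Finset.sum_ite_eq' univ v0 (fun _ => r)]
  simp

lemma effective_dd (v0 : V) {r : ℤ} (hr : 0 ≤ r) : Effective (dd v0 r) := by
  intro u
  rw [dd]
  by_cases h : u = v0 <;> simp [h, hr]

lemma sum_sub_eq (D F : V → ℤ) : ∑ v, (D - F) v = ∑ v, D v - ∑ v, F v := by
  simp only [Pi.sub_apply]
  rw [Finset.sum_sub_distrib]

/-- The minimal degree of an effective divisor whose removal makes `D` unwinnable. -/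
noncomputable def rank1 (G : SimpleGraph V) (D : V → ℤ) : ℤ :=
  sInf {n : ℤ | ∃ F : V → ℤ, Effective F ∧ (∑ v, F v) = n ∧ ¬ Winnable G (D - F)}

lemma rank1_set_nonempty (hne : Nonempty V) (D : V → ℤ) :
    {n : ℤ | ∃ F : V → ℤ, Effective F ∧ (∑ v, F v) = n ∧ ¬ Winnable G (D - F)}.Nonempty := by
  set v0 : V := Classical.arbitrary V
  set m : ℤ := max (∑ v, D v) 0 + 1 with hm
  have hm0 : 0 ≤ m := by
    have := le_max_right (∑ v, D v) 0
    omega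
  refine ⟨m, dd v0 m, effective_dd v0 hm0, sum_dd v0 m, ?_⟩
  intro hw
  have := winnable_sum_nonneg hw
  rw [sum_sub_eq, sum_dd] at this
  have := le_max_left (∑ v, D v) 0
  omega

lemma rank1_set_bddBelow (D : V → ℤ) :
    BddBelow {n : ℤ | ∃ F : V → ℤ, Effective F ∧ (∑ v, F v) = n ∧ ¬ Winnable G (D - F)} := by
  refine ⟨0, ?_⟩
  rintro n ⟨F, hF, hsum, -⟩
  rw [← hsum]
  exact Finset.sum_nonneg fun v _ => hF v

lemma rank1_mem (hne : Nonempty V) (D : V → ℤ) :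
    ∃ F : V → ℤ, Effective F ∧ (∑ v, F v) = rank1 G D ∧ ¬ Winnable G (D - F) :=
  Int.csInf_mem (rank1_set_nonempty hne D) (rank1_set_bddBelow D)

lemma rank1_le {D F : V → ℤ} (hF : Effective F) (hnw : ¬ Winnable G (D - F)) :
    rank1 G D ≤ ∑ v, F v :=
  csInf_le (rank1_set_bddBelow D) ⟨F, hF, rfl, hnw⟩

lemma winnable_extend (hne : Nonempty V) {D : V → ℤ} {r r' : ℤ} (hr' : 0 ≤ r') (hrr : r' ≤ r)
    (hS : ∀ F : V → ℤ, Effective F → (∑ v, F v) = r → Winnable G (D - F)) :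
    ∀ F : V → ℤ, Effective F → (∑ v, F v) = r' → Winnable G (D - F) := by
  intro F hF hsum
  set v0 : V := Classical.arbitrary V
  set F' : V → ℤ := F + dd v0 (r - r') with hF'
  have hF'eff : Effective F' := by
    intro v
    have h1 := hF v
    have h2 := effective_dd v0 (by omega : (0:ℤ) ≤ r - r') v
    rw [hF']
    simp only [Pi.add_apply]
    omega
  have hF'sum : ∑ v, F' v = r := by
    rw [hF']
    simp only [Pi.add_apply]
    rw [Finset.sum_add_distrib, hsum, sum_dd]
    ring
  have hw := hS F' hF'eff hF'sum
  apply winnable_mono (D := D - F') _ hw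
  intro v
  simp only [Pi.sub_apply, Pi.add_apply, hF']
  have := effective_dd v0 (by omega : (0:ℤ) ≤ r - r') v
  omega

lemma rank_eq_rank1_sub_one (hne : Nonempty V) (D : V → ℤ) :
    G.rank D = rank1 G D - 1 := by
  by_cases hw : Winnable G D
  · -- winnable case
    set S : Set ℤ := {r : ℤ | 0 ≤ r ∧ ∀ F : V → ℤ, Effective F → (∑ v, F v) = r →
      ∃ E : V → ℤ, Effective E ∧ G.LinEquiv (D - F) E} with hSdef
    have hw' : ∃ E : V → ℤ, Effective E ∧ G.LinEquiv D E := hw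
    have hrank : G.rank D = sSup S := by
      rw [rank, if_pos hw']
    have hSwin : S = {r : ℤ | 0 ≤ r ∧ ∀ F : V → ℤ, Effective F → (∑ v, F v) = r →
        Winnable G (D - F)} := rfl
    have h0S : (0 : ℤ) ∈ S := by
      rw [hSwin]
      refine ⟨le_refl 0, ?_⟩
      intro F hF hsum
      have hF0 : ∀ v, F v = 0 := by
        intro v
        have h1 := (Finset.sum_eq_zero_iff_of_nonneg (fun u _ => hF u)).1 hsum v (mem_univ v)
        exact h1
      apply winnable_mono (D := D) _ hw
      intro v
      simp only [Pi.sub_apply, hF0 v]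
      omega
    have hSne : S.Nonempty := ⟨0, h0S⟩
    have hSbdd : BddAbove S := by
      refine ⟨∑ v, D v, ?_⟩
      rintro r hr
      rw [hSwin] at hr
      obtain ⟨hr0, hr1⟩ := hr
      set v0 : V := Classical.arbitrary V
      have := winnable_sum_nonneg (hr1 (dd v0 r) (effective_dd v0 hr0) (sum_dd v0 r))
      rw [sum_sub_eq, sum_dd] at this
      omega
    set s := sSup S with hs
    have hsS : s ∈ S := Int.csSup_mem hSne hSbdd
    rw [hSwin] at hsS
    have hclaimA : (s + 1) ∈ {n : ℤ | ∃ F : V → ℤ, Effective F ∧ (∑ v, F v) = n ∧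
        ¬ Winnable G (D - F)} := by
      have hnotS : (s + 1) ∉ S := by
        intro hmem
        have := le_csSup hSbdd hmem
        omega
      rw [hSwin] at hnotS
      simp only [Set.mem_setOf_eq, not_and] at hnotS
      have hs0 : (0:ℤ) ≤ s := hsS.1
      have := hnotS (by omega : (0:ℤ) ≤ s + 1)
      push_neg at this
      obtain ⟨F, hF, hsum, hnw⟩ := this
      exact ⟨F, hF, hsum, hnw⟩
    have hclaimB : ∀ n ∈ {n : ℤ | ∃ F : V → ℤ, Effective F ∧ (∑ v, F v) = n ∧
        ¬ Winnable G (D - F)}, s + 1 ≤ n := by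
      rintro n ⟨F, hF, hsum, hnw⟩
      have hn0 : 0 ≤ n := by
        rw [← hsum]
        exact Finset.sum_nonneg fun v _ => hF v
      by_contra hc
      push_neg at hc
      exact hnw (winnable_extend hne hn0 (by omega) hsS.2 F hF hsum)
    have : rank1 G D = s + 1 := by
      rw [rank1]
      exact le_antisymm (csInf_le (rank1_set_bddBelow D) hclaimA)
        (le_csInf (rank1_set_nonempty hne D) hclaimB)
    rw [hrank, this]
    ring
  · -- unwinnable case
    have hw' : ¬ ∃ E : V → ℤ, Effective E ∧ G.LinEquiv D E := hw
    have hrank : G.rank D = -1 := by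
      rw [rank, if_neg hw']
    have h0 : (0 : ℤ) ∈ {n : ℤ | ∃ F : V → ℤ, Effective F ∧ (∑ v, F v) = n ∧
        ¬ Winnable G (D - F)} := by
      refine ⟨fun _ => 0, fun v => le_refl 0, by simp, ?_⟩
      have : D - (fun _ => (0:ℤ)) = D := by funext v; simp
      rw [this]
      exact hw
    have : rank1 G D = 0 := by
      rw [rank1]
      refine le_antisymm (csInf_le (rank1_set_bddBelow D) h0)
        (le_csInf (rank1_set_nonempty hne D) ?_)
      rintro n ⟨F, hF, hsum, -⟩
      rw [← hsum]
      exact Finset.sum_nonneg fun v _ => hF v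
    rw [hrank, this]
    ring

/-- The key inequality, one half of Riemann–Roch. -/
lemma rank1_key (hG : G.Connected) (D : V → ℤ) :
    rank1 G D ≤ rank1 G (G.canonical - D) + (∑ v, D v) - G.genus + 1 := by
  have hne : Nonempty V := hG.nonempty
  obtain ⟨F, hF, hFsum, hnw⟩ := rank1_mem hne (G.canonical - D)
  obtain ⟨σ, hσ, H, hKH, hHle⟩ := unwinnable_dominated hG hnw
  obtain ⟨σ', hσ', hrev⟩ := exists_reversal (G := G) σ hσ
  set E' : V → ℤ := Nu G σ - H with hE'
  have hE'eff : Effective E' := by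
    intro v
    rw [hE']
    simp only [Pi.sub_apply]
    have := hHle v
    omega
  have hsumNu : ∑ v, Nu G σ v = G.genus - 1 := by
    rw [sum_nu σ hσ, genus]
    ring
  have hsumH : ∑ v, H v = (2 * G.genus - 2) - ∑ v, D v - rank1 G (G.canonical - D) := by
    rw [← linEquiv_sum_eq hKH, sum_sub_eq, sum_sub_eq, sum_canonical, hFsum]
  have hsumE' : ∑ v, E' v = rank1 G (G.canonical - D) + (∑ v, D v) - G.genus + 1 := by
    rw [hE', sum_sub_eq, hsumNu, hsumH]
    ring
  have hnw2 : ¬ Winnable G (D - E') := by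
    intro hwin
    obtain ⟨x, hx⟩ := hKH
    have hequiv : G.LinEquiv (D - E') (Nu G σ' - F) := by
      refine ⟨-x, ?_⟩
      rw [lap_neg, ← hx]
      funext v
      simp only [Pi.sub_apply, Pi.neg_apply]
      have h2 := hrev v
      have h3 : E' v = Nu G σ v - H v := by rw [hE']; simp only [Pi.sub_apply]
      omega
    have hw3 : Winnable G (Nu G σ' - F) := (winnable_congr hequiv).1 hwin
    have hw4 : Winnable G (Nu G σ') := by
      apply winnable_mono _ hw3
      intro v
      simp only [Pi.sub_apply]
      have := hF v
      omega
    exact nu_unwinnable σ' hσ' hw4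
  have := rank1_le hE'eff hnw2
  rw [hsumE'] at this
  exact this

end RR

/-- The Riemann–Roch theorem for graphs. -/
theorem riemannRoch_graph {V : Type*} [Fintype V]
    (G : SimpleGraph V) (hG : G.Connected) (D : V → ℤ) :
    G.rank D - G.rank (G.canonical - D) = (∑ v, D v) - G.genus + 1 := by
  have hne : Nonempty V := hG.nonempty
  have h1 := RR.rank_eq_rank1_sub_one (G := G) hne D
  have h2 := RR.rank_eq_rank1_sub_one (G := G) hne (G.canonical - D)
  have k1 := RR.rank1_key hG D
  have k2 := RR.rank1_key hG (G.canonical - D)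
  have hKK : G.canonical - (G.canonical - D) = D := by
    funext v
    simp only [Pi.sub_apply]
    ring
  rw [hKK] at k2
  have hsumK : ∑ v, (G.canonical - D) v = (2 * G.genus - 2) - ∑ v, D v := by
    rw [RR.sum_sub_eq, RR.sum_canonical]
  rw [hsumK] at k2
  rw [h1, h2]
  linarith [k1, k2]
end

section
/- Let G be a finite connected simple graph of genus g = |E(G)| − |V(G)| + 1 and let D be a divisor on G with deg(D) ≤ g − 1. Then D has rank r(D) ≥ 0 (i.e. D is equivalent to an effective divisor) if and only if D is equivalent to D_𝒪 for some sourceless partial orientation 𝒪 of G, where D_𝒪(v) = indeg_𝒪(v) − 1 for every vertex v. -/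
open Finset
open scoped Classical

open SimpleGraph

namespace BackmanAux

set_option linter.unusedSectionVars false
set_option maxHeartbeats 1000000

variable {V : Type*} [Fintype V] (G : SimpleGraph V)

noncomputable def lift2 (f : V → V → ℤ) : Sym2 V → ℤ :=
  Sym2.lift ⟨fun a b => f a b + f b a, fun a b => by ring⟩

@[simp] lemma lift2_mk (f : V → V → ℤ) (a b : V) : lift2 f s(a, b) = f a b + f b a := rfl

lemma sum_adj_eq_sum_edges (f : V → V → ℤ) :
    (∑ v, ∑ u, if G.Adj v u then f v u else 0) = ∑ e ∈ G.edgeFinset, lift2 f e := by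
  classical
  have h1 : (∑ v, ∑ u, if G.Adj v u then f v u else 0)
      = ∑ d : G.Dart, f d.fst d.snd := by
    rw [← Finset.sum_product', ← Finset.sum_filter]
    refine (Finset.sum_bij' (i := fun p hp => (⟨p, by
        simpa using (Finset.mem_filter.mp hp).2⟩ : G.Dart))
      (j := fun (d : G.Dart) _ => d.toProd) ?_ ?_ ?_ ?_ ?_)
    · intro p hp; exact Finset.mem_univ _
    · intro d _
      simp only [Finset.mem_filter, Finset.mem_product, Finset.mem_univ, true_and]
      exact d.adj
    · intro p hp; rfl
    · intro d _; rfl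
    · intro p hp; rfl
  rw [h1]
  rw [← Finset.sum_fiberwise_of_maps_to (t := G.edgeFinset) (g := SimpleGraph.Dart.edge)
    (fun d _ => by rw [SimpleGraph.mem_edgeFinset]; exact d.edge_mem) (fun d => f d.fst d.snd)]
  refine Finset.sum_congr rfl ?_
  intro e he
  induction e with
  | _ a b =>
    have hab : G.Adj a b := by simpa using he
    have hd : (Finset.univ.filter fun d : G.Dart => d.edge = s(a, b)) =
        {(⟨(a, b), hab⟩ : G.Dart), (⟨(a,b),hab⟩ : G.Dart).symm} := by
      have := SimpleGraph.Dart.edge_fiber (⟨(a, b), hab⟩ : G.Dart)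
      convert this using 2 with d
      exact Iff.rfl
    rw [hd, Finset.sum_pair (by exact fun h => (⟨(a, b), hab⟩ : G.Dart).symm_ne h.symm)]
    simp [SimpleGraph.Dart.symm]

/-- indicator of a finset, integer valued -/
noncomputable def indic (A : Finset V) (v : V) : ℤ := if v ∈ A then 1 else 0

lemma indic_nonneg (A : Finset V) (v : V) : 0 ≤ indic A v := by
  unfold indic; split <;> omega

/-- number of chips in A -/
def chips (y : V → ℤ) (A : Finset V) : ℤ := ∑ v ∈ A, y v

/-- number of edges incident to A, as an integer -/
noncomputable def etouch (A : Finset V) : ℤ :=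
  ∑ e ∈ G.edgeFinset, if (∃ v ∈ A, v ∈ e) then 1 else 0

/-- the potential of the set A -/
noncomputable def phi (y : V → ℤ) (A : Finset V) : ℤ :=
  chips y A + A.card - etouch G A

/-- outdegree count from v to the complement of S -/
noncomputable def odegZ (S : Finset V) (v : V) : ℤ :=
  ∑ u, if G.Adj v u ∧ u ∉ S then 1 else 0

lemma odegZ_nonneg (S : Finset V) (v : V) : 0 ≤ odegZ G S v :=
  Finset.sum_nonneg (fun u _ => by split <;> omega)

lemma sum_lap_eq (x : V → ℤ) (A : Finset V) :
    ∑ v ∈ A, G.lap x v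
      = ∑ e ∈ G.edgeFinset, lift2 (fun a b => indic A a * (x a - x b)) e := by
  classical
  rw [← sum_adj_eq_sum_edges]
  have h2 : ∀ v, (if v ∈ A then G.lap x v else 0)
      = ∑ u, if G.Adj v u then indic A v * (x v - x u) else 0 := by
    intro v
    by_cases hv : v ∈ A
    · simp only [hv, if_true, SimpleGraph.lap, indic]
      refine Finset.sum_congr rfl (fun u _ => ?_)
      split <;> simp
    · simp only [hv, if_false, indic]
      rw [eq_comm, Finset.sum_eq_zero]
      intro u _
      split <;> simp
  calc ∑ v ∈ A, G.lap x v = ∑ v, if v ∈ A then G.lap x v else 0 := by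
        rw [Finset.sum_ite_mem Finset.univ A (fun v => G.lap x v), Finset.univ_inter]
    _ = ∑ v, ∑ u, if G.Adj v u then indic A v * (x v - x u) else 0 :=
        Finset.sum_congr rfl (fun v _ => h2 v)


variable {V : Type*} [Fintype V] (G : SimpleGraph V)

lemma touch_iff (A : Finset V) (a b : V) :
    (∃ v ∈ A, v ∈ (s(a, b) : Sym2 V)) ↔ (a ∈ A ∨ b ∈ A) := by
  constructor
  · rintro ⟨v, hv, h⟩
    rw [Sym2.mem_iff] at h
    rcases h with rfl | rfl
    · exact Or.inl hv
    · exact Or.inr hv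
  · rintro (h | h)
    · exact ⟨a, h, by simp⟩
    · exact ⟨b, h, by simp⟩

lemma lap_indic_mem {S : Finset V} {v : V} (hv : v ∈ S) :
    G.lap (indic S) v = odegZ G S v := by
  unfold SimpleGraph.lap odegZ
  refine Finset.sum_congr rfl (fun u _ => ?_)
  by_cases ha : G.Adj v u <;> by_cases hu : u ∈ S <;> simp [ha, hu, indic, hv]

lemma lap_indic_not_mem {S : Finset V} {v : V} (hv : v ∉ S) :
    G.lap (indic S) v ≤ 0 := by
  unfold SimpleGraph.lap
  refine Finset.sum_nonpos (fun u _ => ?_)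
  by_cases ha : G.Adj v u <;> by_cases hu : u ∈ S <;>
    simp [ha, hu, indic, hv]

lemma etouch_insert {A : Finset V} {v : V} (hv : v ∉ A) :
    etouch G (insert v A) = etouch G A + odegZ G A v := by
  classical
  have key : etouch G (insert v A) - etouch G A
      = ∑ e ∈ G.edgeFinset, lift2 (fun a b => if a = v ∧ b ∉ A then (1:ℤ) else 0) e := by
    unfold etouch
    rw [← Finset.sum_sub_distrib]
    refine Finset.sum_congr rfl (fun e he => ?_)
    induction e with
    | _ a b =>
      have hab : G.Adj a b := by simpa using he
      have hne : a ≠ b := hab.ne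
      simp only [lift2_mk, touch_iff]
      by_cases h1 : a = v <;> by_cases h2 : b = v <;>
        by_cases h3 : a ∈ A <;> by_cases h4 : b ∈ A <;>
        simp_all [Finset.mem_insert]
  have key2 : ∑ e ∈ G.edgeFinset, lift2 (fun a b => if a = v ∧ b ∉ A then (1:ℤ) else 0) e
      = odegZ G A v := by
    rw [← sum_adj_eq_sum_edges]
    unfold odegZ
    rw [Finset.sum_eq_single v]
    · refine Finset.sum_congr rfl (fun u _ => ?_)
      by_cases ha : G.Adj v u <;> by_cases hu : u ∈ A <;> simp [ha, hu]
    · intro w _ hw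
      refine Finset.sum_eq_zero (fun u _ => ?_)
      by_cases ha : G.Adj w u <;> simp [ha, hw]
    · intro h; exact absurd (Finset.mem_univ v) h
  omega

lemma phi_empty (y : V → ℤ) : phi G y ∅ = 0 := by
  unfold phi chips etouch
  simp

lemma phi_sub_lap (y x : V → ℤ) (A : Finset V) :
    phi G (y - G.lap x) A = phi G y A - ∑ v ∈ A, G.lap x v := by
  unfold phi chips
  have : ∑ v ∈ A, (y - G.lap x) v = ∑ v ∈ A, y v - ∑ v ∈ A, G.lap x v := by
    rw [← Finset.sum_sub_distrib]; rfl
  rw [this]; ring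

lemma odegZ_erase {S : Finset V} {v : V} (hv : v ∈ S) :
    odegZ G (S.erase v) v = odegZ G S v := by
  unfold odegZ
  refine Finset.sum_congr rfl (fun u _ => ?_)
  by_cases ha : G.Adj v u
  · have hne : u ≠ v := fun h => (h ▸ ha).ne' rfl
    simp [ha, Finset.mem_erase, hne]
  · simp [ha]

lemma phi_erase (y : V → ℤ) {S : Finset V} {v : V} (hv : v ∈ S) :
    phi G y S = phi G y (S.erase v) + y v + 1 - odegZ G S v := by
  have h1 : etouch G S = etouch G (S.erase v) + odegZ G (S.erase v) v := by
    conv_lhs => rw [← Finset.insert_erase hv]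
    exact etouch_insert G (Finset.notMem_erase v S)
  have h2 : chips y S = chips y (S.erase v) + y v := by
    unfold chips
    rw [← Finset.add_sum_erase _ _ hv]; ring
  have h3 : (S.card : ℤ) = (S.erase v).card + 1 := by
    rw [Finset.card_erase_of_mem hv]
    have := Finset.card_pos.mpr ⟨v, hv⟩
    push_cast [Nat.sub_add_cancel this]
    omega
  unfold phi
  rw [h1, h2, h3, odegZ_erase G hv]
  ring

lemma chips_modular (y : V → ℤ) (A S : Finset V) :
    chips y (A ∪ S) + chips y (A ∩ S) = chips y A + chips y S := by
  unfold chips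
  exact Finset.sum_union_inter

lemma card_modular (A S : Finset V) :
    ((A ∪ S).card : ℤ) + ((A ∩ S).card : ℤ) = (A.card : ℤ) + (S.card : ℤ) := by
  exact_mod_cast Finset.card_union_add_card_inter A S

lemma phi_fire_le (y : V → ℤ) (A S : Finset V) :
    phi G y A - ∑ v ∈ A, G.lap (indic S) v
      ≤ phi G y (A ∪ S) + phi G y (A ∩ S) - phi G y S := by
  have key : etouch G (A ∪ S) + etouch G (A ∩ S) - etouch G A - etouch G S
      ≤ ∑ v ∈ A, G.lap (indic S) v := by
    rw [sum_lap_eq]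
    unfold etouch
    rw [← Finset.sum_add_distrib, ← Finset.sum_sub_distrib, ← Finset.sum_sub_distrib]
    refine Finset.sum_le_sum (fun e he => ?_)
    induction e with
    | _ a b =>
      simp only [lift2_mk, touch_iff]
      unfold indic
      by_cases h1 : a ∈ A <;> by_cases h2 : b ∈ A <;>
        by_cases h3 : a ∈ S <;> by_cases h4 : b ∈ S <;>
        simp_all [Finset.mem_union, Finset.mem_inter]
  have hmod := chips_modular y A S
  have hcd := card_modular A S
  unfold phi
  omega

lemma sum_lap_indic_nonneg {A S : Finset V} (h : S ⊆ A) :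
    0 ≤ ∑ v ∈ A, G.lap (indic S) v := by
  rw [sum_lap_eq]
  refine Finset.sum_nonneg (fun e he => ?_)
  induction e with
  | _ a b =>
    simp only [lift2_mk]
    unfold indic
    by_cases h3 : a ∈ S <;> by_cases h4 : b ∈ S
    · simp [h3, h4, h h3, h h4]
    · simp only [h3, h4, if_true, if_false, h h3]
      split <;> norm_num
    · simp only [h3, h4, if_true, if_false, h h4]
      split <;> norm_num
    · simp [h3, h4]

lemma sum_lap_univ (x : V → ℤ) : ∑ v, G.lap x v = 0 := by
  rw [sum_lap_eq]
  refine Finset.sum_eq_zero (fun e he => ?_)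
  induction e with
  | _ a b =>
    simp only [lift2_mk]
    unfold indic
    simp

lemma exists_cross {S : Finset V} :
    ∀ {a b : V}, G.Walk a b → a ∈ S → b ∉ S → ∃ v ∈ S, ∃ u, G.Adj v u ∧ u ∉ S := by
  intro a b w
  induction w with
  | nil => intro h1 h2; exact absurd h1 h2
  | cons h p ih =>
    rename_i u v w'
    intro h1 h2
    by_cases hv : v ∈ S
    · exact ih hv h2
    · exact ⟨u, h1, v, h, hv⟩

lemma one_le_sum_lap_indic (hG : G.Connected) {S : Finset V}
    (hne : S.Nonempty) (hproper : S ≠ Finset.univ) :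
    1 ≤ ∑ v ∈ S, G.lap (indic S) v := by
  obtain ⟨a, ha⟩ := hne
  obtain ⟨b, hb⟩ : ∃ b, b ∉ S := by
    by_contra h
    push_neg at h
    exact hproper (Finset.eq_univ_iff_forall.mpr h)
  obtain ⟨v0, hv0, u0, hadj, hu0⟩ := exists_cross G (hG.preconnected a b).some ha hb
  have hterm : 1 ≤ G.lap (indic S) v0 := by
    rw [lap_indic_mem G hv0]
    unfold odegZ
    calc (1 : ℤ) = if G.Adj v0 u0 ∧ u0 ∉ S then 1 else 0 := by simp [hadj, hu0]
      _ ≤ ∑ u, if G.Adj v0 u ∧ u ∉ S then (1:ℤ) else 0 :=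
        Finset.single_le_sum (f := fun u => if G.Adj v0 u ∧ u ∉ S then (1:ℤ) else 0)
          (fun u _ => by split <;> omega) (Finset.mem_univ u0)
  calc (1:ℤ) ≤ G.lap (indic S) v0 := hterm
    _ ≤ ∑ v ∈ S, G.lap (indic S) v := by
      refine Finset.single_le_sum (fun v hv => ?_) hv0
      rw [lap_indic_mem G hv]
      exact odegZ_nonneg G S v
lemma lap_zero : G.lap 0 = 0 := by
  funext v
  unfold SimpleGraph.lap
  simp

lemma lap_add (x x' : V → ℤ) : G.lap (x + x') = G.lap x + G.lap x' := by
  funext v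
  show _ = G.lap x v + G.lap x' v
  unfold SimpleGraph.lap
  rw [← Finset.sum_add_distrib]
  refine Finset.sum_congr rfl (fun u _ => ?_)
  by_cases h : G.Adj v u <;> simp [h] <;> ring

noncomputable def Mnat (y : V → ℤ) : ℕ :=
  Finset.univ.sup fun A : Finset V => (phi G y A).toNat

noncomputable def achievers (y : V → ℤ) : Finset (Finset V) :=
  Finset.univ.filter (fun A => phi G y A = (Mnat G y : ℤ))

noncomputable def meas (y : V → ℤ) : ℕ :=
  Mnat G y * (2 ^ Fintype.card V + 1) + (achievers G y).card

lemma phi_le_Mnat (y : V → ℤ) (A : Finset V) : phi G y A ≤ (Mnat G y : ℤ) := by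
  have h := Finset.le_sup (f := fun A : Finset V => (phi G y A).toNat) (Finset.mem_univ A)
  unfold Mnat
  omega

lemma Mnat_achieved (y : V → ℤ) (hm : 1 ≤ Mnat G y) :
    ∃ A : Finset V, phi G y A = (Mnat G y : ℤ) := by
  obtain ⟨A, -, hA⟩ := Finset.exists_mem_eq_sup (Finset.univ : Finset (Finset V))
    ⟨∅, Finset.mem_univ ∅⟩ (fun A => (phi G y A).toNat)
  refine ⟨A, ?_⟩
  unfold Mnat at hm ⊢
  omega

lemma cnt_le (y : V → ℤ) : (achievers G y).card ≤ 2 ^ Fintype.card V := by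
  calc (achievers G y).card ≤ (Finset.univ : Finset (Finset V)).card :=
        Finset.card_filter_le _ _
    _ = Fintype.card (Finset V) := Finset.card_univ
    _ = 2 ^ Fintype.card V := Fintype.card_finset

lemma step (hG : G.Connected) (y : V → ℤ) (hy : Effective y)
    (hu : phi G y Finset.univ ≤ 0) (hm : 1 ≤ Mnat G y) :
    ∃ S : Finset V, Effective (y - G.lap (indic S)) ∧
      meas G (y - G.lap (indic S)) < meas G y := by
  classical
  obtain ⟨A0, hA0⟩ := Mnat_achieved G y hm
  have hT : (achievers G y).Nonempty :=
    ⟨A0, Finset.mem_filter.mpr ⟨Finset.mem_univ _, hA0⟩⟩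
  obtain ⟨S, hSmem, hSmin⟩ := Finset.exists_min_image (achievers G y) Finset.card hT
  have hSphi : phi G y S = (Mnat G y : ℤ) := (Finset.mem_filter.mp hSmem).2
  have hSne : S.Nonempty := by
    rw [Finset.nonempty_iff_ne_empty]
    intro h
    rw [h, phi_empty] at hSphi
    omega
  have hSuniv : S ≠ Finset.univ := by
    intro h
    rw [h] at hSphi
    omega
  have hleg : ∀ v ∈ S, odegZ G S v ≤ y v := by
    intro v hv
    by_contra hlt
    push_neg at hlt
    have he := phi_erase G y hv
    have h2 := phi_le_Mnat G y (S.erase v)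
    have hmem : S.erase v ∈ achievers G y :=
      Finset.mem_filter.mpr ⟨Finset.mem_univ _, by omega⟩
    have hcard := hSmin _ hmem
    have := Finset.card_erase_of_mem hv
    have hpos := Finset.card_pos.mpr ⟨v, hv⟩
    omega
  set y' := y - G.lap (indic S) with hy'def
  have hEff' : Effective y' := by
    intro v
    by_cases hv : v ∈ S
    · have := lap_indic_mem G hv
      have := hleg v hv
      show 0 ≤ y v - G.lap (indic S) v
      omega
    · have := lap_indic_not_mem G hv
      have := hy v
      show 0 ≤ y v - G.lap (indic S) v
      omega
  have hphiy' : ∀ A, phi G y' A = phi G y A - ∑ v ∈ A, G.lap (indic S) v :=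
    fun A => phi_sub_lap G y (indic S) A
  have key1 : ∀ A : Finset V, phi G y' A ≤ (Mnat G y : ℤ) ∧
      (phi G y' A = (Mnat G y : ℤ) → A ∈ achievers G y) := by
    intro A
    by_cases hAS : S ⊆ A
    · have h0 := sum_lap_indic_nonneg G hAS
      have h1 := phi_le_Mnat G y A
      rw [hphiy']
      constructor
      · omega
      · intro h
        refine Finset.mem_filter.mpr ⟨Finset.mem_univ _, by omega⟩
    · have hss : A ∩ S ⊂ S := by
        refine Finset.ssubset_iff_subset_ne.mpr ⟨Finset.inter_subset_right, ?_⟩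
        intro h
        exact hAS (Finset.inter_eq_right.mp h)
      have hlt : phi G y (A ∩ S) < (Mnat G y : ℤ) := by
        rcases lt_or_eq_of_le (phi_le_Mnat G y (A ∩ S)) with h | h
        · exact h
        · exfalso
          have hmem : A ∩ S ∈ achievers G y :=
            Finset.mem_filter.mpr ⟨Finset.mem_univ _, h⟩
          have := hSmin _ hmem
          have := Finset.card_lt_card hss
          omega
      have hf := phi_fire_le G y A S
      have h2 := phi_le_Mnat G y (A ∪ S)
      rw [hphiy']
      constructor
      · omega
      · intro h; omega
  have key2 : phi G y' S < (Mnat G y : ℤ) := by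
    rw [hphiy']
    have := one_le_sum_lap_indic G hG hSne hSuniv
    omega
  have hMle : Mnat G y' ≤ Mnat G y := by
    have : ∀ A : Finset V, (phi G y' A).toNat ≤ Mnat G y := by
      intro A
      have := (key1 A).1
      omega
    exact Finset.sup_le (fun A _ => this A)
  refine ⟨S, hEff', ?_⟩
  rw [← hy'def]
  unfold meas
  set K := 2 ^ Fintype.card V with hK
  rcases lt_or_eq_of_le hMle with hlt | heq
  · have hc' := cnt_le G y'
    have harith : Mnat G y * (K + 1) = (Mnat G y - 1) * (K + 1) + (K + 1) := by
      have h1 : Mnat G y - 1 + 1 = Mnat G y := Nat.sub_add_cancel hm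
      calc Mnat G y * (K + 1) = (Mnat G y - 1 + 1) * (K + 1) := by rw [h1]
        _ = (Mnat G y - 1) * (K + 1) + (K + 1) := by ring
    have hmul : Mnat G y' * (K + 1) ≤ (Mnat G y - 1) * (K + 1) :=
      Nat.mul_le_mul_right _ (by omega)
    omega
  · have hsub : achievers G y' ⊆ (achievers G y).erase S := by
      intro A hA
      have hphiA : phi G y' A = (Mnat G y : ℤ) := by
        have := (Finset.mem_filter.mp hA).2
        rw [← heq]
        exact this
      refine Finset.mem_erase.mpr ⟨?_, (key1 A).2 hphiA⟩
      intro h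
      rw [h] at hphiA
      omega
    have hcard : (achievers G y').card < (achievers G y).card := by
      calc (achievers G y').card ≤ ((achievers G y).erase S).card :=
            Finset.card_le_card hsub
        _ < (achievers G y).card := by
            rw [Finset.card_erase_of_mem hSmem]
            have := Finset.card_pos.mpr ⟨S, hSmem⟩
            omega
    rw [heq]
    omega

lemma reduce (hG : G.Connected) : ∀ (n : ℕ) (y : V → ℤ), meas G y ≤ n → Effective y →
    phi G y Finset.univ ≤ 0 →
    ∃ x : V → ℤ, Effective (y - G.lap x) ∧ (∀ A, phi G (y - G.lap x) A ≤ 0) := by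
  intro n
  induction n with
  | zero =>
    intro y hmeas hy hu
    refine ⟨0, ?_, ?_⟩
    · rw [lap_zero, sub_zero]; exact hy
    · intro A
      rw [lap_zero, sub_zero]
      have h1 := phi_le_Mnat G y A
      have h2 : Mnat G y = 0 := by
        have : Mnat G y ≤ Mnat G y * (2 ^ Fintype.card V + 1) := Nat.le_mul_of_pos_right _ (by positivity)
        unfold meas at hmeas
        omega
      omega
  | succ n ih =>
    intro y hmeas hy hu
    by_cases hm : Mnat G y = 0
    · refine ⟨0, ?_, ?_⟩
      · rw [lap_zero, sub_zero]; exact hy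
      · intro A
        rw [lap_zero, sub_zero]
        have h1 := phi_le_Mnat G y A
        omega
    · obtain ⟨S, hEff', hmeas'⟩ := step G hG y hy hu (by omega)
      have hu' : phi G (y - G.lap (indic S)) Finset.univ ≤ 0 := by
        rw [phi_sub_lap, sum_lap_univ]
        omega
      obtain ⟨x', hE, hA⟩ := ih (y - G.lap (indic S)) (by omega) hEff' hu'
      refine ⟨indic S + x', ?_, ?_⟩
      · have heq : y - G.lap (indic S + x') = (y - G.lap (indic S)) - G.lap x' := by
          rw [lap_add]; ring
        rw [heq]; exact hE
      · have heq : y - G.lap (indic S + x') = (y - G.lap (indic S)) - G.lap x' := by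
          rw [lap_add]; ring
        rw [heq]; exact hA
lemma inc_exists {v : V} {e : Sym2 V} (he : e ∈ G.incidenceFinset v) :
    ∃ u, G.Adj v u ∧ e = s(v, u) := by
  classical
  rw [SimpleGraph.mem_incidenceFinset] at he
  obtain ⟨heE, hve⟩ := he
  induction e with
  | _ a b =>
    have hadj : G.Adj a b := heE
    rw [Sym2.mem_iff] at hve
    rcases hve with rfl | rfl
    · exact ⟨b, hadj, rfl⟩
    · exact ⟨a, hadj.symm, Sym2.eq_swap⟩

lemma etouch_eq_card (A : Finset V) :
    etouch G A = ((A.biUnion (fun v => G.incidenceFinset v)).card : ℤ) := by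
  classical
  have hfil : A.biUnion (fun v => G.incidenceFinset v)
      = G.edgeFinset.filter (fun e => ∃ v ∈ A, v ∈ e) := by
    ext e
    simp only [Finset.mem_biUnion, Finset.mem_filter, SimpleGraph.mem_incidenceFinset,
      SimpleGraph.incidenceSet, Set.mem_setOf_eq, SimpleGraph.mem_edgeFinset]
    constructor
    · rintro ⟨v, hv, he, hve⟩
      exact ⟨he, v, hv, hve⟩
    · rintro ⟨he, v, hv, hve⟩
      exact ⟨v, hv, he, hve⟩
  rw [hfil]
  unfold etouch
  rw [Finset.sum_boole]

lemma exists_orientation (y : V → ℤ) (hy : Effective y) (hall : ∀ A, phi G y A ≤ 0) :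
    ∃ O : V → V → Prop,
      (∀ u v, O u v → G.Adj u v) ∧
      (∀ u v, O u v → ¬ O v u) ∧
      (∀ v, ∃ u, O u v) ∧
      (∀ v, (∑ u, if O u v then (1 : ℤ) else 0) = y v + 1) := by
  classical
  set d : V → ℕ := fun v => (y v).toNat + 1 with hd
  set t : (Σ v : V, Fin (d v)) → Finset (Sym2 V) := fun p => G.incidenceFinset p.1 with ht
  have hHall : ∀ s : Finset (Σ v : V, Fin (d v)), s.card ≤ (s.biUnion t).card := by
    intro s
    set S := s.image Sigma.fst with hS
    have h1 : s.biUnion t = S.biUnion (fun v => G.incidenceFinset v) := by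
      ext e
      simp only [Finset.mem_biUnion, Finset.mem_image, ht, hS]
      constructor
      · rintro ⟨p, hp, he⟩
        exact ⟨p.1, ⟨p, hp, rfl⟩, he⟩
      · rintro ⟨v, ⟨p, hp, rfl⟩, he⟩
        exact ⟨p, hp, he⟩
    have h2 : s ⊆ S.sigma (fun v => (Finset.univ : Finset (Fin (d v)))) := by
      intro p hp
      exact Finset.mem_sigma.mpr ⟨Finset.mem_image_of_mem _ hp, Finset.mem_univ _⟩
    have h3 : s.card ≤ ∑ v ∈ S, d v := by
      calc s.card ≤ (S.sigma (fun v => (Finset.univ : Finset (Fin (d v))))).card :=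
            Finset.card_le_card h2
        _ = ∑ v ∈ S, d v := by rw [Finset.card_sigma]; simp
    have h4 : ((∑ v ∈ S, d v : ℕ) : ℤ) = chips y S + S.card := by
      simp only [hd]
      push_cast
      unfold chips
      rw [Finset.sum_add_distrib]
      congr 1
      · exact Finset.sum_congr rfl (fun v _ => Int.toNat_of_nonneg (hy v))
      · simp
    have h5 := hall S
    have h6 := etouch_eq_card G S
    unfold phi at h5
    rw [h1]
    omega
  obtain ⟨f, hfinj, hfmem⟩ := (Finset.all_card_le_biUnion_card_iff_exists_injective t).mp hHall
  refine ⟨fun u v => ∃ i : Fin (d v), f ⟨v, i⟩ = s(u, v), ?_, ?_, ?_, ?_⟩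
  · rintro u v ⟨i, hi⟩
    have := hfmem ⟨v, i⟩
    rw [ht] at this
    rw [SimpleGraph.mem_incidenceFinset] at this
    have heE := this.1
    rw [hi] at heE
    exact heE
  · rintro u v ⟨i, hi⟩ ⟨j, hj⟩
    have huv : G.Adj u v := by
      have := hfmem ⟨v, i⟩
      rw [ht, SimpleGraph.mem_incidenceFinset] at this
      have heE := this.1
      rw [hi] at heE
      exact heE
    rw [Sym2.eq_swap] at hj
    have : (⟨v, i⟩ : Σ v : V, Fin (d v)) = ⟨u, j⟩ := hfinj (by rw [hi, hj])
    have hvu : v = u := congrArg Sigma.fst this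
    rw [hvu] at huv
    exact G.loopless.irrefl u huv
  · intro v
    have h0 : (0 : Fin (d v)) = ⟨0, Nat.succ_pos _⟩ := rfl
    obtain ⟨u, hadj, hedge⟩ := inc_exists G (hfmem ⟨v, (0 : Fin (d v))⟩)
    exact ⟨u, ⟨0, by rw [hedge, Sym2.eq_swap]⟩⟩
  · intro v
    have hcard : ∀ P : Finset V, (∀ u, u ∈ P ↔ ∃ i : Fin (d v), f ⟨v, i⟩ = s(u, v)) →
        P.card = d v := by
      intro P hP
      have := Finset.card_bij'
        (s := P)
        (t := (Finset.univ : Finset (Fin (d v))))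
        (i := fun u hu => Classical.choose ((hP u).mp hu))
        (j := fun k _ => Classical.choose (inc_exists G (hfmem ⟨v, k⟩)))
        (fun u hu => Finset.mem_univ _)
        ?hj ?left ?right
      · rw [this, Finset.card_univ, Fintype.card_fin]
      case hj =>
        intro k _
        obtain ⟨hadj, hedge⟩ := Classical.choose_spec (inc_exists G (hfmem ⟨v, k⟩))
        refine (hP _).mpr ⟨k, ?_⟩
        exact hedge.trans Sym2.eq_swap
      case left =>
        intro u hu
        set k := Classical.choose ((hP u).mp hu) with hk
        have hspec : f ⟨v, k⟩ = s(u, v) := Classical.choose_spec ((hP u).mp hu)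
        obtain ⟨hadj, hedge⟩ := Classical.choose_spec (inc_exists G (hfmem ⟨v, k⟩))
        set w := Classical.choose (inc_exists G (hfmem ⟨v, k⟩))
        have : s(u, v) = s(v, w) := by rw [← hspec, hedge]
        rw [Sym2.eq_swap (a := v) (b := w)] at this
        have hcase := Sym2.eq_iff.mp this
        rcases hcase with ⟨h1, h2⟩ | ⟨h1, h2⟩
        · have h3 : w = u := h1.symm
          exact h3
        · have h3 : w = u := h2.symm.trans h1.symm
          exact h3
      case right =>
        intro k hk
        set u := Classical.choose (inc_exists G (hfmem ⟨v, k⟩)) with hu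
        obtain ⟨hadj, hedge⟩ := Classical.choose_spec (inc_exists G (hfmem ⟨v, k⟩))
        have hmem : u ∈ P := by
          refine (hP _).mpr ⟨k, ?_⟩
          rw [hedge, Sym2.eq_swap]
        set k' := Classical.choose ((hP u).mp hmem) with hk'
        have hspec' : f ⟨v, k'⟩ = s(u, v) := Classical.choose_spec ((hP u).mp hmem)
        show k' = k
        have heq : f ⟨v, k'⟩ = f ⟨v, k⟩ := by
          rw [hspec', hedge, Sym2.eq_swap]
        have := hfinj heq
        have h2 := (Sigma.mk.inj_iff.mp this).2
        exact eq_of_heq h2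
    have hdv : ((d v : ℕ) : ℤ) = y v + 1 := by
      simp only [hd]
      have := hy v
      push_cast
      omega
    show (∑ u : V, @ite ℤ (∃ i : Fin (d v), f ⟨v, i⟩ = s(u, v))
      (Classical.propDecidable _) 1 0) = y v + 1
    letI instP : DecidablePred (fun u : V => ∃ i : Fin (d v), f ⟨v, i⟩ = s(u, v)) :=
      fun u => Classical.propDecidable _
    refine Eq.trans (Finset.sum_filter _ _).symm ?_
    rw [Finset.sum_const, hcard _ (fun u => by simp), nsmul_eq_mul, mul_one, hdv]

lemma etouch_univ : etouch G (Finset.univ : Finset V) = (G.edgeFinset.card : ℤ) := by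
  unfold etouch
  have h : ∀ e ∈ G.edgeFinset, (if (∃ v ∈ (Finset.univ : Finset V), v ∈ e) then (1:ℤ) else 0) = 1 := by
    intro e he
    induction e with
    | _ a b => simp
  rw [Finset.sum_congr rfl h, Finset.sum_const, nsmul_eq_mul, mul_one]

lemma genus_eq (G : SimpleGraph V) :
    G.genus = (G.edgeFinset.card : ℤ) - (Fintype.card V : ℤ) + 1 := by
  unfold SimpleGraph.genus
  congr 2
  rw [Nat.card_eq_fintype_card, SimpleGraph.edgeFinset_card]

end BackmanAux

open BackmanAux


/-- A divisor of degree at most `g − 1` is equivalent to an effective divisor (i.e. has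
rank `≥ 0`) if and only if it is equivalent to `D_𝒪` for some sourceless partial
orientation `𝒪`, where `D_𝒪(v) = indeg_𝒪(v) − 1`. -/
theorem equiv_effective_iff_sourceless_partial_orientation {V : Type*} [Fintype V]
    (G : SimpleGraph V) (hG : G.Connected) (D : V → ℤ)
    (hdeg : (∑ v, D v) ≤ G.genus - 1) :
    (∃ E : V → ℤ, Effective E ∧ G.LinEquiv D E) ↔
      ∃ O : V → V → Prop,
        (∀ u v, O u v → G.Adj u v) ∧
        (∀ u v, O u v → ¬ O v u) ∧
        (∀ v, ∃ u, O u v) ∧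
        G.LinEquiv D (fun v => (∑ u, if O u v then (1 : ℤ) else 0) - 1) := by
  constructor
  · rintro ⟨E, hE, x1, hx1⟩
    -- degree of E equals degree of D
    have hdegE : ∑ v, E v = ∑ v, D v := by
      have h0 : ∑ v, (D - E) v = ∑ v, G.lap x1 v := by rw [hx1]
      rw [sum_lap_univ] at h0
      have h1 : ∑ v, (D - E) v = ∑ v, D v - ∑ v, E v := by
        rw [← Finset.sum_sub_distrib]; rfl
      omega
    have hphiE : phi G E Finset.univ ≤ 0 := by
      unfold phi chips
      rw [etouch_univ]
      have hg := genus_eq (V := V) G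
      have hcard : (Finset.univ : Finset V).card = Fintype.card V := Finset.card_univ
      rw [hcard]
      omega
    obtain ⟨x2, hEff2, hAll2⟩ := reduce G hG (meas G E) E le_rfl hE hphiE
    obtain ⟨O, h1, h2, h3, h4⟩ := exists_orientation G (E - G.lap x2) hEff2 hAll2
    refine ⟨O, h1, h2, h3, ?_⟩
    have hfun : (fun v => (∑ u, if O u v then (1 : ℤ) else 0) - 1) = E - G.lap x2 := by
      funext v
      rw [h4 v]
      ring
    rw [hfun]
    refine ⟨x1 + x2, ?_⟩
    rw [lap_add, ← hx1]
    ring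
  · rintro ⟨O, hadj, hasym, hsrc, hequiv⟩
    refine ⟨_, ?_, hequiv⟩
    intro v
    obtain ⟨u0, hu0⟩ := hsrc v
    have : (1 : ℤ) ≤ ∑ u, if O u v then (1 : ℤ) else 0 := by
      calc (1:ℤ) = if O u0 v then (1:ℤ) else 0 := by simp [hu0]
        _ ≤ ∑ u, if O u v then (1 : ℤ) else 0 :=
          Finset.single_le_sum (f := fun u => if O u v then (1:ℤ) else 0)
            (fun u _ => by split <;> omega) (Finset.mem_univ u0)
    show 0 ≤ (∑ u, if O u v then (1 : ℤ) else 0) - 1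
    omega
end
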